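/- Let $p$ be a positive integer and set $\delta = \min\{\frac{1}{6}, \frac{1}{p(p+1)}\}$. Then there do not exist $n \in \mathbb{N}$, $m \in \mathbb{N}^+$, elements $\gamma_1,\dots,\gamma_n \in \Phi_p \setminus \{0\}$, and real numbers $b_1,\dots,b_m \in (1-\delta, 1)$ such that $2 = \sum_{i=1}^n \gamma_i + \sum_{j=1}^m b_j$. -/

import Mathlib

/-- The hyperstandard set `Φ_p = {1 - k/(p·m) | m ∈ ℕ⁺, 0 ≤ k ≤ p} ∩ [0,1]`. -/
def Phi (p : ℕ) : Set ℝ :=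
  {x | (∃ m k : ℕ, 0 < m ∧ k ≤ p ∧ x = 1 - (k : ℝ) / (p * m)) ∧ 0 ≤ x ∧ x ≤ 1}

set_option maxHeartbeats 1000000

lemma key (p : ℕ) (hp : 0 < p) (d : ℝ) (hd0 : 0 < d) (hd1 : d ≤ 1/6)
    (hd2 : d * ((p : ℝ) * ((p : ℝ) + 1)) ≤ 1)
    (n : ℕ) (γ : Fin n → ℝ)
    (h : ∀ i, γ i ∈ Phi p ∧ γ i ≠ 0)
    (h1 : 1 < ∑ i, γ i) (h2 : ∑ i, γ i < 1 + d) : False := by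
  classical
  have hP : (1 : ℝ) ≤ p := by exact_mod_cast hp
  have hP0 : (0 : ℝ) < p := by linarith
  have hmem : ∀ i, (∃ m k : ℕ, 0 < m ∧ k ≤ p ∧ γ i = 1 - (k : ℝ) / (p * m)) ∧
      0 ≤ γ i ∧ γ i ≤ 1 := fun i => (h i).1
  choose M K hM hK hEq using fun i => (hmem i).1
  have hpos : ∀ i, 0 < γ i := fun i => lt_of_le_of_ne (hmem i).2.1 (Ne.symm (h i).2)
  have hle1 : ∀ i, γ i ≤ 1 := fun i => (hmem i).2.2
  have hMR : ∀ i, (0:ℝ) < M i := fun i => by exact_mod_cast hM i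
  have hKR : ∀ i, (K i : ℝ) ≤ p := fun i => by exact_mod_cast hK i
  have hbig : ∀ i, M i ≠ 1 → 1/2 ≤ γ i := by
    intro i hMi
    have hm2n : 2 ≤ M i := by have := hM i; omega
    have hm2 : (2 : ℝ) ≤ M i := by exact_mod_cast hm2n
    have hden : (0:ℝ) < (p : ℝ) * M i := mul_pos hP0 (hMR i)
    have hb : (K i : ℝ) / ((p:ℝ) * M i) ≤ 1/2 := by
      rw [div_le_iff₀ hden]; nlinarith [hKR i]
    rw [hEq i]; linarith
  set T : Finset (Fin n) := Finset.univ.filter (fun i => M i = 1) with hTdef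
  set B : Finset (Fin n) := Finset.univ.filter (fun i => ¬ M i = 1) with hBdef
  have hsplit : ∑ i ∈ T, γ i + ∑ i ∈ B, γ i = ∑ i, γ i :=
    Finset.sum_filter_add_sum_filter_not _ _ _
  have hBmem : ∀ i ∈ B, M i ≠ 1 := by
    intro i hi; rw [hBdef] at hi; exact (Finset.mem_filter.mp hi).2
  set J : ℕ := ∑ i ∈ T, (p - K i) with hJdef
  have hTsum : ∑ i ∈ T, γ i = (J : ℝ) / p := by
    rw [hJdef, Nat.cast_sum, Finset.sum_div]
    refine Finset.sum_congr rfl fun i hi => ?_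
    have hMi : M i = 1 := by
      rw [hTdef] at hi; exact (Finset.mem_filter.mp hi).2
    have hKlt : K i < p := by
      by_contra hc
      have hKp : K i = p := le_antisymm (hK i) (not_lt.mp hc)
      apply (h i).2
      rw [hEq i, hMi, hKp]
      push_cast
      field_simp
      norm_num
    rw [hEq i, hMi, Nat.cast_sub hKlt.le]
    push_cast
    field_simp
  have hTnn : (0:ℝ) ≤ (J:ℝ)/p := by positivity
  clear_value T B J
  have hBcase : B.card = 0 ∨ B.card = 1 ∨ B.card = 2 ∨ 3 ≤ B.card := by omega
  rcases hBcase with h0c | h1c | h2c | h3c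
  · -- B empty
    have hB0 : B = ∅ := Finset.card_eq_zero.mp h0c
    have hS : ∑ i, γ i = (J:ℝ)/p := by rw [← hsplit, hTsum, hB0, Finset.sum_empty, add_zero]
    rw [hS] at h1 h2
    have hJgt : (p:ℝ) < J := by rwa [lt_div_iff₀ hP0, one_mul] at h1
    have hJlt : (J:ℝ) < (1+d) * p := by rwa [div_lt_iff₀ hP0] at h2
    have hPd : (p:ℝ) * d < 1 := by nlinarith [mul_nonneg hd0.le hP0.le]
    have e1 : p < J := by exact_mod_cast hJgt
    have e2 : (J:ℝ) < (p:ℝ) + 1 := by nlinarith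
    have e3 : (J:ℝ) < ((p + 1 : ℕ) : ℝ) := by push_cast; linarith
    have e4 : J < p + 1 := by exact_mod_cast e3
    omega
  · -- B singleton
    obtain ⟨a, hBa⟩ := Finset.card_eq_one.mp h1c
    have haB : a ∈ B := by rw [hBa]; exact Finset.mem_singleton_self a
    have hMa : M a ≠ 1 := hBmem a haB
    have hma2 : 2 ≤ M a := by have := hM a; omega
    have hma2R : (2:ℝ) ≤ M a := by exact_mod_cast hma2
    have hden : (0:ℝ) < (p:ℝ) * M a := mul_pos hP0 (hMR a)
    have hS : ∑ i, γ i = (J:ℝ)/p + (1 - (K a:ℝ)/((p:ℝ)*M a)) := by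
      rw [← hsplit, hTsum, hBa, Finset.sum_singleton, hEq a]
    rw [hS] at h1 h2
    have hx1 : (K a:ℝ)/((p:ℝ)*M a) < (J:ℝ)/p := by linarith
    have hx1' : (K a:ℝ) * p < (J:ℝ) * ((p:ℝ) * M a) := (div_lt_div_iff₀ hden hP0).mp hx1
    have ee : (J:ℝ) * ((p:ℝ) * M a) = ((J:ℝ) * M a) * p := by ring
    rw [ee] at hx1'
    have hkJm : (K a:ℝ) < (J:ℝ) * M a := lt_of_mul_lt_mul_right hx1' hP0.le
    have hkJmN : K a < J * M a := by exact_mod_cast hkJm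
    have hJ1 : 1 ≤ J := by
      rcases Nat.eq_zero_or_pos J with h0' | h0'
      · rw [h0', zero_mul] at hkJmN; omega
      · exact h0'
    have hk1N : K a + 1 ≤ J * M a := hkJmN
    have hk1 : (K a:ℝ) + 1 ≤ (J:ℝ) * M a := by exact_mod_cast hk1N
    have hx2 : (J:ℝ)/p - (K a:ℝ)/((p:ℝ)*M a) < d := by linarith
    have e2 : (J:ℝ)/p - (K a:ℝ)/((p:ℝ)*M a) = ((J:ℝ)*M a - K a)/((p:ℝ)*M a) := by
      field_simp
    rw [e2] at hx2
    have hx2' : (J:ℝ)*M a - K a < d * ((p:ℝ) * M a) := by rwa [div_lt_iff₀ hden] at hx2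
    have h5 : d * ((p:ℝ)*M a) * ((p:ℝ)+1) ≤ (M a:ℝ) := by
      have h6 := mul_le_mul_of_nonneg_left hd2 (hMR a).le
      have e5 : d * ((p:ℝ)*M a) * ((p:ℝ)+1) = (M a:ℝ) * (d * ((p:ℝ)*((p:ℝ)+1))) := by ring
      rw [e5]; linarith
    have hmul : ((J:ℝ)*M a - K a) * ((p:ℝ)+1) < (M a:ℝ) :=
      lt_of_lt_of_le (mul_lt_mul_of_pos_right hx2' (by linarith)) h5
    have h7 : ((p:ℝ)+1) ≤ ((J:ℝ)*M a - K a) * ((p:ℝ)+1) :=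
      le_mul_of_one_le_left (by linarith) (by linarith)
    have hmge0 : (p:ℝ) + 1 < M a := by linarith
    have hmgeN : p + 1 < M a := by exact_mod_cast hmge0
    have hmge : (p:ℝ) + 2 ≤ M a := by
      have : p + 2 ≤ M a := hmgeN
      have := (Nat.cast_le (α := ℝ)).mpr this
      push_cast at this; linarith
    rcases eq_or_lt_of_le hJ1 with hJe | hJgt2
    · have hJr : (J:ℝ) = 1 := by exact_mod_cast hJe.symm
      rw [hJr, one_mul] at hmul
      nlinarith [hmul, hKR a, hmge, hP0,
        mul_le_mul_of_nonneg_right (hKR a) hP0.le,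
        mul_le_mul_of_nonneg_right hmge hP0.le]
    · have hJ2 : (2:ℝ) ≤ J := by exact_mod_cast hJgt2
      nlinarith [hmul, hKR a, hmge, hP0, hP,
        mul_nonneg (mul_nonneg (by linarith : (0:ℝ) ≤ (J:ℝ) - 2) (hMR a).le) hP0.le,
        mul_nonneg (by linarith : (0:ℝ) ≤ (J:ℝ) - 2) (hMR a).le,
        mul_le_mul_of_nonneg_right (hKR a) hP0.le,
        mul_le_mul_of_nonneg_right hmge hP0.le]
  · -- B has two elements
    obtain ⟨a, c, hac, hBac⟩ := Finset.card_eq_two.mp h2c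
    have haB : a ∈ B := by rw [hBac]; simp
    have hcB : c ∈ B := by rw [hBac]; simp
    have hMa : 2 ≤ M a := by have := hM a; have := hBmem a haB; omega
    have hMc : 2 ≤ M c := by have := hM c; have := hBmem c hcB; omega
    have hMaR : (2:ℝ) ≤ M a := by exact_mod_cast hMa
    have hMcR : (2:ℝ) ≤ M c := by exact_mod_cast hMc
    have hdena : (0:ℝ) < (p:ℝ) * M a := mul_pos hP0 (hMR a)
    have hdenc : (0:ℝ) < (p:ℝ) * M c := mul_pos hP0 (hMR c)
    have hga : 1/2 ≤ γ a := hbig a (hBmem a haB)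
    have hgc : 1/2 ≤ γ c := hbig c (hBmem c hcB)
    have hBsum : ∑ i ∈ B, γ i = γ a + γ c := by rw [hBac, Finset.sum_pair hac]
    have hS : ∑ i, γ i = (J:ℝ)/p + (γ a + γ c) := by rw [← hsplit, hTsum, hBsum]
    have hJ0 : J = 0 := by
      by_contra hJ
      have hJ1 : (1:ℝ) ≤ (J:ℝ) := by exact_mod_cast Nat.one_le_iff_ne_zero.mpr hJ
      have hfrac : 1/(p:ℝ) ≤ (J:ℝ)/p := by gcongr
      have h2' := h2
      rw [hS] at h2'
      have hlt : 1/(p:ℝ) < d := by linarith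
      have hdp : 1 < d * p := by rw [div_lt_iff₀ hP0] at hlt; linarith
      nlinarith [hd0, hP, hd2, mul_nonneg (by linarith : (0:ℝ) ≤ (p:ℝ)-1) (mul_nonneg hd0.le hP0.le)]
    rw [hS, hJ0] at h1 h2
    norm_num at h1 h2
    rw [hEq a, hEq c] at h1 h2
    have hxa : (K a:ℝ)/((p:ℝ)*M a) ≤ 1/(M a:ℝ) := by
      rw [div_le_div_iff₀ hdena (hMR a)]
      nlinarith [hKR a, (hMR a).le]
    have hxc : (K c:ℝ)/((p:ℝ)*M c) ≤ 1/(M c:ℝ) := by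
      rw [div_le_div_iff₀ hdenc (hMR c)]
      nlinarith [hKR c, (hMR c).le]
    have hCa : M a = 2 := by
      by_contra hne
      have h3 : 3 ≤ M a := by omega
      have h3R : (3:ℝ) ≤ M a := by exact_mod_cast h3
      have ha3 : 1/(M a:ℝ) ≤ 1/3 := one_div_le_one_div_of_le (by norm_num) h3R
      have hc2 : 1/(M c:ℝ) ≤ 1/2 := one_div_le_one_div_of_le (by norm_num) hMcR
      linarith [hxa, hxc, hd1]
    have hCc : M c = 2 := by
      by_contra hne
      have h3 : 3 ≤ M c := by omega
      have h3R : (3:ℝ) ≤ M c := by exact_mod_cast h3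
      have hc3 : 1/(M c:ℝ) ≤ 1/3 := one_div_le_one_div_of_le (by norm_num) h3R
      have ha2 : 1/(M a:ℝ) ≤ 1/2 := one_div_le_one_div_of_le (by norm_num) hMaR
      linarith [hxa, hxc, hd1]
    rw [hCa, hCc] at h1 h2
    push_cast at h1 h2
    have h2p : (0:ℝ) < (p:ℝ)*2 := by linarith
    have hlt1 : ((K a:ℝ) + K c)/((p:ℝ)*2) < 1 := by rw [add_div]; linarith
    have hltr : (K a:ℝ) + K c < (p:ℝ)*2 := by rwa [div_lt_one h2p] at hlt1
    have hltN : K a + K c < 2*p := by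
      have : ((K a + K c : ℕ):ℝ) < ((2*p : ℕ):ℝ) := by push_cast; linarith
      exact_mod_cast this
    have hleN : K a + K c + 1 ≤ 2*p := hltN
    have hleR : (K a:ℝ) + K c + 1 ≤ 2*p := by
      have : ((K a + K c + 1 : ℕ):ℝ) ≤ ((2*p:ℕ):ℝ) := by exact_mod_cast hleN
      push_cast at this; linarith
    have hgt : 1 - d < ((K a:ℝ) + K c)/((p:ℝ)*2) := by rw [add_div]; linarith
    rw [lt_div_iff₀ h2p] at hgt
    nlinarith [hgt, hleR, hd2, hd0, hP,
      mul_nonneg (by linarith : (0:ℝ) ≤ (p:ℝ)-1) (mul_nonneg hd0.le hP0.le)]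
  · -- at least three big elements
    have hhalf : (B.card:ℝ) * (1/2) ≤ ∑ i ∈ B, γ i := by
      have hle := Finset.card_nsmul_le_sum B γ (1/2) (fun i hi => hbig i (hBmem i hi))
      simpa [nsmul_eq_mul] using hle
    have h3R : (3:ℝ) ≤ (B.card:ℝ) := by exact_mod_cast h3c
    linarith [hTnn, hsplit, hTsum, hhalf, hd1, h2]

theorem no_solution_sum_two (p : ℕ) (hp : 0 < p) :
    ¬ ∃ (n m : ℕ) (γ : Fin n → ℝ) (b : Fin m → ℝ), 0 < m ∧
      (∀ i, γ i ∈ Phi p ∧ γ i ≠ 0) ∧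
      (∀ j, 1 - min (1/6 : ℝ) (1 / ((p : ℝ) * (p + 1))) < b j ∧ b j < 1) ∧
      (2 : ℝ) = ∑ i, γ i + ∑ j, b j := by
  rintro ⟨n, m, γ, b, hm, hγ, hb, hsum⟩
  have hP : (1:ℝ) ≤ p := by exact_mod_cast hp
  have hP0 : (0:ℝ) < p := by linarith
  set d : ℝ := min (1/6 : ℝ) (1 / ((p : ℝ) * ((p:ℝ) + 1))) with hddef
  have hb' : ∀ j, 1 - d < b j ∧ b j < 1 := hb
  have hd0 : 0 < d := lt_min (by norm_num) (by positivity)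
  have hd1 : d ≤ 1/6 := min_le_left _ _
  have hd2 : d * ((p:ℝ) * ((p:ℝ)+1)) ≤ 1 := by
    have hmin := min_le_right (1/6 : ℝ) (1/((p:ℝ)*((p:ℝ)+1)))
    have hpos : (0:ℝ) < (p:ℝ)*((p:ℝ)+1) := by positivity
    calc d * ((p:ℝ)*((p:ℝ)+1)) ≤ (1/((p:ℝ)*((p:ℝ)+1))) * ((p:ℝ)*((p:ℝ)+1)) := by
          exact mul_le_mul_of_nonneg_right (hddef ▸ hmin) hpos.le
      _ = 1 := by field_simp
  have hγpos : ∀ i, 0 < γ i := fun i => lt_of_le_of_ne ((hγ i).1.2.1) (Ne.symm (hγ i).2)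
  have hγnn : 0 ≤ ∑ i, γ i := Finset.sum_nonneg fun i _ => (hγpos i).le
  rcases m with _ | _ | _ | m
  · exact absurd hm (lt_irrefl 0)
  · -- one b
    have hs : ∑ j : Fin 1, b j = b 0 := Fin.sum_univ_one b
    rw [hs] at hsum
    have hb0 := hb' 0
    exact key p hp d hd0 hd1 hd2 n γ hγ (by linarith [hb0.2]) (by linarith [hb0.1])
  · -- two b's
    have hs : ∑ j : Fin 2, b j = b 0 + b 1 := Fin.sum_univ_two b
    rw [hs] at hsum
    have hb0 := hb' 0
    have hb1 := hb' 1
    rcases n with _ | n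
    · rw [Fin.sum_univ_zero] at hsum; linarith [hb0.2, hb1.2]
    · obtain ⟨⟨mm, kk, hmm, hkk, heq⟩, hge, hle⟩ := (hγ 0).1
      have h2dp : 2 * (d * (p:ℝ)) ≤ 1 := by nlinarith [mul_nonneg hd0.le hP0.le]
      have hγ0 : 2*d ≤ γ 0 := by
        rcases Nat.lt_or_ge mm 2 with hm1 | hm2
        · -- mm = 1
          have hmm1 : mm = 1 := by omega
          have hkklt : kk < p := by
            by_contra hc
            have hkkp : kk = p := le_antisymm hkk (not_lt.mp hc)
            apply (hγ 0).2
            rw [heq, hmm1, hkkp]; push_cast; field_simp; norm_num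
          have hkkR : (kk:ℝ) ≤ (p:ℝ) - 1 := by
            have : ((kk + 1 : ℕ):ℝ) ≤ ((p:ℕ):ℝ) := by exact_mod_cast hkklt
            push_cast at this; linarith
          rw [heq, hmm1]
          push_cast
          rw [mul_one]
          have hfr : (kk:ℝ)/(p:ℝ) ≤ ((p:ℝ)-1)/(p:ℝ) := by gcongr
          have : ((p:ℝ)-1)/(p:ℝ) = 1 - 1/(p:ℝ) := by field_simp
          rw [this] at hfr
          have h1p : 2*d ≤ 1/(p:ℝ) := by
            rw [le_div_iff₀ hP0]; linarith
          linarith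
        · -- mm ≥ 2
          have hm2R : (2:ℝ) ≤ (mm:ℝ) := by exact_mod_cast hm2
          have hmmR : (0:ℝ) < (mm:ℝ) := by linarith
          have hden : (0:ℝ) < (p:ℝ) * mm := mul_pos hP0 hmmR
          have hkkR : (kk:ℝ) ≤ (p:ℝ) := by exact_mod_cast hkk
          have hfr : (kk:ℝ)/((p:ℝ)*mm) ≤ 1/2 := by
            rw [div_le_iff₀ hden]; nlinarith
          rw [heq]; linarith
      have hsle : γ 0 ≤ ∑ i, γ i := Finset.single_le_sum (fun i _ => (hγpos i).le) (Finset.mem_univ 0)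
      linarith [hb0.1, hb1.1]
  · -- at least three b's
    have hcard : ((m+3:ℕ):ℝ) * (1 - d) ≤ ∑ j, b j := by
      have hle := Finset.card_nsmul_le_sum Finset.univ b (1-d) (fun j _ => (hb' j).1.le)
      simp only [nsmul_eq_mul, Finset.card_univ, Fintype.card_fin] at hle
      push_cast at hle ⊢
      convert hle using 2
      rfl
      ring
    have h3 : (3:ℝ) ≤ ((m+3:ℕ):ℝ) := by push_cast; linarith [Nat.cast_nonneg (α := ℝ) m]
    nlinarith [hγnn, hcard, hd1, hd0, hsum,
      mul_nonneg (by linarith : (0:ℝ) ≤ ((m+3:ℕ):ℝ) - 3) (by linarith : (0:ℝ) ≤ 1 - d)]
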